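/- The optimal trajectory lies on the grid: for every w ∈ ℝ, the point (w, β(w)) belongs to G. -/

import Mathlib

/-- `f` is affine on the set `s`. -/
def AffOn (f : ℝ → ℝ) (s : Set ℝ) : Prop := ∃ a c : ℝ, ∀ y ∈ s, f y = a * y + c

/-- Left derivative of `f` at `x`. -/
noncomputable def lDeriv (f : ℝ → ℝ) (x : ℝ) : ℝ := derivWithin f (Set.Iio x) x

/-- Right derivative of `f` at `x`. -/
noncomputable def rDeriv (f : ℝ → ℝ) (x : ℝ) : ℝ := derivWithin f (Set.Ioi x) x

/-- `f` is piecewise affine with partition points `x 1 < x 2 < … < x N`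
(no partition points if `N = 0`, in which case `f` is affine on all of `ℝ`). -/
def PWAff (f : ℝ → ℝ) (N : ℕ) (x : ℕ → ℝ) : Prop :=
  (∀ i, 1 ≤ i → i + 1 ≤ N → x i < x (i + 1)) ∧
  (N = 0 → AffOn f Set.univ) ∧
  (1 ≤ N → AffOn f (Set.Iic (x 1)) ∧ AffOn f (Set.Ici (x N)) ∧
    ∀ i, 1 ≤ i → i + 1 ≤ N → AffOn f (Set.Icc (x i) (x (i + 1))))

/-- `f` belongs to class `H` as witnessed by the points `x 1 < … < x N`:
piecewise linear, concave on `ℝ`, and eventually constant. -/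
def ClassHAux (f : ℝ → ℝ) (N : ℕ) (x : ℕ → ℝ) : Prop :=
  PWAff f N x ∧ ConcaveOn ℝ Set.univ f ∧ ∃ xb : ℝ, ∀ y, xb ≤ y → f y = f xb

/-- `f` belongs to class `H`. -/
def ClassH (f : ℝ → ℝ) : Prop := ∃ N x, ClassHAux f N x

/-- `x 1 < … < x N` are the singular values of the class-`H` function `f`:
they partition `ℝ` into pieces on which `f` is affine and each of them is a genuine
kink, i.e. the right derivative is strictly smaller than the left derivative there. -/
def HasSingVals (f : ℝ → ℝ) (N : ℕ) (x : ℕ → ℝ) : Prop :=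
  ClassHAux f N x ∧ ∀ i, 1 ≤ i → i ≤ N → rDeriv f (x i) < lDeriv f (x i)

/-- The dynamic-programming objective
`H(w,b) = R⁻¹ (p f(wR + b(u−R)) + (1−p) g(wR + b(d−R)))`. -/
noncomputable def Hfun (R u d p : ℝ) (f g : ℝ → ℝ) (w b : ℝ) : ℝ :=
  R⁻¹ * (p * f (w * R + b * (u - R)) + (1 - p) * g (w * R + b * (d - R)))

/-- The value function `V(w) = sup_b H(w,b)`. -/
noncomputable def Vfun (R u d p : ℝ) (f g : ℝ → ℝ) (w : ℝ) : ℝ :=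
  ⨆ b : ℝ, Hfun R u d p f g w b

/-- The set of maximizers `B(w) = {b : H(w,b) = V(w)}`. -/
noncomputable def Bset (R u d p : ℝ) (f g : ℝ → ℝ) (w : ℝ) : Set ℝ :=
  {b : ℝ | Hfun R u d p f g w b = Vfun R u d p f g w}

/-- The minimal optimal strategy `β(w) = min B(w)`. -/
noncomputable def betaFun (R u d p : ℝ) (f g : ℝ → ℝ) (w : ℝ) : ℝ :=
  sInf (Bset R u d p f g w)

/-- The grid line `C^u = {(w,b) : wR + b(u−R) = c}`. -/
def Cu (R u : ℝ) (c : ℝ) : Set (ℝ × ℝ) := {pt | pt.1 * R + pt.2 * (u - R) = c}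

/-- The grid line `C^d = {(w,b) : wR + b(d−R) = c}`. -/
def Cd (R d : ℝ) (c : ℝ) : Set (ℝ × ℝ) := {pt | pt.1 * R + pt.2 * (d - R) = c}

/-- The grid `G`, the union of the lines `C^u_i`, `1 ≤ i ≤ Nu`, and `C^d_j`, `1 ≤ j ≤ Nd`. -/
def Grid (R u d : ℝ) (Nu : ℕ) (xu : ℕ → ℝ) (Nd : ℕ) (xd : ℕ → ℝ) : Set (ℝ × ℝ) :=
  (⋃ i ∈ Finset.Icc 1 Nu, Cu R u (xu i)) ∪ (⋃ j ∈ Finset.Icc 1 Nd, Cd R d (xd j))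

/-- The open parallelogram `D_ij`, for `0 ≤ i ≤ Nu`, `0 ≤ j ≤ Nd`, with the conventions
`x^u_0 = x^d_0 = −∞` and `x^u_{Nu+1} = x^d_{Nd+1} = +∞`. -/
def Dset (R u d : ℝ) (Nu : ℕ) (xu : ℕ → ℝ) (Nd : ℕ) (xd : ℕ → ℝ) (i j : ℕ) : Set (ℝ × ℝ) :=
  {pt | (1 ≤ i → xu i < pt.1 * R + pt.2 * (u - R)) ∧
        (i < Nu → pt.1 * R + pt.2 * (u - R) < xu (i + 1)) ∧
        (1 ≤ j → xd j < pt.1 * R + pt.2 * (d - R)) ∧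
        (j < Nd → pt.1 * R + pt.2 * (d - R) < xd (j + 1))}

lemma affOn_mono {f : ℝ → ℝ} {s t : Set ℝ} (h : AffOn f s) (hts : t ⊆ s) : AffOn f t := by
  obtain ⟨a, c, h⟩ := h
  exact ⟨a, c, fun y hy => h y (hts hy)⟩

lemma le_const_of_classH {f : ℝ → ℝ} (hconc : ConcaveOn ℝ Set.univ f)
    {xb : ℝ} (hxb : ∀ y, xb ≤ y → f y = f xb) : ∀ y, f y ≤ f xb := by
  intro y
  rcases le_or_gt xb y with h | h
  · exact (hxb y h).le
  · have hz : xb ≤ 2 * xb - y := by linarith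
    have hc := hconc.2 (Set.mem_univ y) (Set.mem_univ (2 * xb - y))
      (by norm_num : (0:ℝ) ≤ 1/2) (by norm_num : (0:ℝ) ≤ 1/2) (by norm_num)
    simp only [smul_eq_mul] at hc
    have harg : (1/2 : ℝ) * y + (1/2 : ℝ) * (2 * xb - y) = xb := by ring
    rw [harg, hxb _ hz] at hc
    linarith

lemma tendsto_atBot_of_classH {f : ℝ → ℝ} (hconc : ConcaveOn ℝ Set.univ f)
    {xb : ℝ} (hxb : ∀ y, xb ≤ y → f y = f xb)
    (hnc : ∃ a b : ℝ, f a ≠ f b) :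
    Filter.Tendsto f Filter.atBot Filter.atBot := by
  have hle := le_const_of_classH hconc hxb
  obtain ⟨z, hz⟩ : ∃ z, f z < f xb := by
    obtain ⟨a, b, hab⟩ := hnc
    rcases lt_or_eq_of_le (hle a) with h | h
    · exact ⟨a, h⟩
    rcases lt_or_eq_of_le (hle b) with h' | h'
    · exact ⟨b, h'⟩
    exact absurd (h.trans h'.symm) hab
  have hzxb : z < xb := by
    by_contra h
    push_neg at h
    rw [hxb z h] at hz
    exact lt_irrefl _ hz
  set K : ℝ := (f z - f xb) / (xb - z) with hK
  have hs : (0:ℝ) < xb - z := by linarith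
  have hKneg : K < 0 := div_neg_of_neg_of_pos (by linarith) hs
  have key : ∀ y ≤ z - 1, f y ≤ f xb + K * (xb - y) := by
    intro y hy
    have hyz : y < z := by linarith
    have hxy : (0:ℝ) < xb - y := by linarith
    have hlam0 : 0 < (xb - z) / (xb - y) := div_pos hs hxy
    have hmu0 : 0 ≤ (z - y) / (xb - y) := div_nonneg (by linarith) hxy.le
    have hsum : (xb - z) / (xb - y) + (z - y) / (xb - y) = 1 := by
      field_simp
      ring
    have harg : (xb - z) / (xb - y) * y + (z - y) / (xb - y) * xb = z := by
      field_simp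
      ring
    have hc := hconc.2 (Set.mem_univ y) (Set.mem_univ xb) hlam0.le hmu0 hsum
    simp only [smul_eq_mul] at hc
    rw [harg] at hc
    -- hc : lam * f y + mu * f xb ≤ f z
    have h1 : (xb - z) * f y + (z - y) * f xb ≤ (xb - y) * f z := by
      have := mul_le_mul_of_nonneg_left hc hxy.le
      have e1 : (xb - y) * ((xb - z) / (xb - y) * f y + (z - y) / (xb - y) * f xb)
          = (xb - z) * f y + (z - y) * f xb := by
        field_simp
      linarith [e1 ▸ this]
    have hKc : K * (xb - z) = f z - f xb := div_mul_cancel₀ _ (ne_of_gt hs)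
    -- goal : f y ≤ f xb + K * (xb - y)
    nlinarith [h1, hKc, hs, hxy]
  have hlin : Filter.Tendsto (fun y : ℝ => f xb + K * (xb - y)) Filter.atBot Filter.atBot := by
    apply Filter.tendsto_atBot_add_const_left
    rw [Filter.tendsto_const_mul_atBot_of_neg hKneg]
    exact Filter.tendsto_atTop_add_const_left _ _ (Filter.tendsto_neg_atBot_atTop)
  refine Filter.tendsto_atBot_mono' Filter.atBot ?_ hlin
  filter_upwards [Filter.eventually_le_atBot (z - 1)] with y hy using key y hy

lemma exists_affOn_nbhd {f : ℝ → ℝ} {N : ℕ} {x : ℕ → ℝ} (hpw : PWAff f N x) (hN : 1 ≤ N)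
    {y0 : ℝ} (hy0 : ∀ i, 1 ≤ i → i ≤ N → y0 ≠ x i) :
    ∃ ε > 0, AffOn f (Set.Icc (y0 - ε) (y0 + ε)) := by
  obtain ⟨hmono, -, hpieces⟩ := hpw
  obtain ⟨h1, hNr, hmid⟩ := hpieces hN
  rcases lt_or_ge y0 (x 1) with hlt | hge
  · refine ⟨(x 1 - y0) / 2, by linarith, affOn_mono h1 fun y hy => ?_⟩
    obtain ⟨hy1, hy2⟩ := hy
    simp only [Set.mem_Iic]
    linarith
  rcases lt_or_ge (x N) y0 with hgt | hle2
  · refine ⟨(y0 - x N) / 2, by linarith, affOn_mono hNr fun y hy => ?_⟩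
    obtain ⟨hy1, hy2⟩ := hy
    simp only [Set.mem_Ici]
    linarith
  · -- x 1 ≤ y0 ≤ x N, y0 not equal to any x i
    have h1lt : x 1 < y0 := lt_of_le_of_ne hge (Ne.symm (hy0 1 le_rfl hN))
    have hNlt : y0 < x N := lt_of_le_of_ne hle2 (hy0 N hN le_rfl)
    set T : Finset ℕ := (Finset.Icc 1 N).filter (fun i => x i < y0) with hT
    have h1T : 1 ∈ T := by
      simp [hT, Finset.mem_filter, Finset.mem_Icc, hN, h1lt]
    have hTne : T.Nonempty := ⟨1, h1T⟩
    set i : ℕ := T.max' hTne with hi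
    have hiT : i ∈ T := T.max'_mem hTne
    simp only [hT, Finset.mem_filter, Finset.mem_Icc] at hiT
    obtain ⟨⟨hi1, hiN⟩, hxi⟩ := hiT
    have hiNe : i ≠ N := by
      intro h
      rw [h] at hxi
      linarith
    have hi1N : i + 1 ≤ N := Nat.succ_le_of_lt (lt_of_le_of_ne hiN hiNe)
    have hxi1 : y0 < x (i + 1) := by
      rcases lt_or_ge y0 (x (i+1)) with h | h
      · exact h
      · exfalso
        have : i + 1 ∈ T := by
          simp only [hT, Finset.mem_filter, Finset.mem_Icc]
          exact ⟨⟨by omega, hi1N⟩, lt_of_le_of_ne h (Ne.symm (hy0 (i+1) (by omega) hi1N))⟩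
        have := T.le_max' _ this
        omega
    refine ⟨min (y0 - x i) (x (i+1) - y0), by
        apply lt_min <;> linarith,
      affOn_mono (hmid i hi1 hi1N) fun y hy => ?_⟩
    obtain ⟨hy1, hy2⟩ := hy
    have ha := min_le_left (y0 - x i) (x (i+1) - y0)
    have hb := min_le_right (y0 - x i) (x (i+1) - y0)
    exact ⟨by linarith, by linarith⟩

/-- The optimal trajectory lies on the grid: `(w, β(w)) ∈ G` for all `w`. -/
theorem stmt_8 (R u d p : ℝ) (hd : 0 < d) (hdR : d < R) (hRu : R < u)
    (hp0 : 0 < p) (hp1 : p < 1)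
    (f g : ℝ → ℝ) (Nu Nd : ℕ) (xu xd : ℕ → ℝ)
    (hf : HasSingVals f Nu xu) (hg : HasSingVals g Nd xd)
    (hNu : 1 ≤ Nu) (hNd : 1 ≤ Nd)
    (hfnc : ∃ a b : ℝ, f a ≠ f b) (hgnc : ∃ a b : ℝ, g a ≠ g b) :
    ∀ w : ℝ, (w, betaFun R u d p f g w) ∈ Grid R u d Nu xu Nd xd := by
  intro w
  have hR : 0 < R := hd.trans hdR
  have hs0 : 0 < u - R := by linarith
  have ht0 : d - R < 0 := by linarith
  have hq0 : 0 < 1 - p := by linarith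
  obtain ⟨⟨hfpw, hfconc, xbf, hxbf⟩, -⟩ := hf
  obtain ⟨⟨hgpw, hgconc, xbg, hxbg⟩, -⟩ := hg
  have hfbot := tendsto_atBot_of_classH hfconc hxbf hfnc
  have hgbot := tendsto_atBot_of_classH hgconc hxbg hgnc
  have hfcont : Continuous f := continuousOn_univ.mp (hfconc.continuousOn isOpen_univ)
  have hgcont : Continuous g := continuousOn_univ.mp (hgconc.continuousOn isOpen_univ)
  set φ : ℝ → ℝ := fun b => Hfun R u d p f g w b with hφdef
  have hφeq : ∀ b, φ b = R⁻¹ * (p * f (w * R + b * (u - R)) +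
      (1 - p) * g (w * R + b * (d - R))) := fun b => rfl
  have hargu : Continuous fun b : ℝ => w * R + b * (u - R) := by continuity
  have hargd : Continuous fun b : ℝ => w * R + b * (d - R) := by continuity
  have hφc : Continuous φ := by
    apply continuous_const.mul
    exact (continuous_const.mul (hfcont.comp hargu)).add
      (continuous_const.mul (hgcont.comp hargd))
  -- coercivity at +∞
  have htop : Filter.Tendsto φ Filter.atTop Filter.atBot := by
    have h1 : Filter.Tendsto (fun b : ℝ => w * R + b * (d - R)) Filter.atTop Filter.atBot := by
      apply Filter.tendsto_atBot_add_const_left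
      exact (Filter.tendsto_mul_const_atBot_of_neg ht0).mpr Filter.tendsto_id
    have hg1 : Filter.Tendsto (fun b : ℝ => (1 - p) * g (w * R + b * (d - R)))
        Filter.atTop Filter.atBot := by
      rw [Filter.tendsto_const_mul_atBot_of_pos hq0]
      exact hgbot.comp h1
    have hf1 : Filter.Tendsto (fun b : ℝ => p * f (w * R + b * (u - R)))
        Filter.atTop (nhds (p * f xbf)) := by
      have h2 : ∀ᶠ b : ℝ in Filter.atTop, p * f xbf = p * f (w * R + b * (u - R)) := by
        filter_upwards [Filter.eventually_ge_atTop ((xbf - w * R) / (u - R))] with b hb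
        rw [div_le_iff₀ hs0] at hb
        rw [hxbf (w * R + b * (u - R)) (by linarith)]
      exact Filter.Tendsto.congr' h2 tendsto_const_nhds
    have hsum : Filter.Tendsto (fun b : ℝ => p * f (w * R + b * (u - R)) +
        (1 - p) * g (w * R + b * (d - R))) Filter.atTop Filter.atBot :=
      Filter.Tendsto.add_atBot hf1 hg1
    have := (Filter.tendsto_const_mul_atBot_of_pos (inv_pos.mpr hR)).mpr hsum
    exact this.congr fun b => (hφeq b).symm
  -- coercivity at -∞
  have hbot : Filter.Tendsto φ Filter.atBot Filter.atBot := by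
    have h1 : Filter.Tendsto (fun b : ℝ => w * R + b * (u - R)) Filter.atBot Filter.atBot := by
      apply Filter.tendsto_atBot_add_const_left
      exact (Filter.tendsto_mul_const_atBot_of_pos hs0).mpr Filter.tendsto_id
    have hf1 : Filter.Tendsto (fun b : ℝ => p * f (w * R + b * (u - R)))
        Filter.atBot Filter.atBot := by
      rw [Filter.tendsto_const_mul_atBot_of_pos hp0]
      exact hfbot.comp h1
    have hg1 : Filter.Tendsto (fun b : ℝ => (1 - p) * g (w * R + b * (d - R)))
        Filter.atBot (nhds ((1 - p) * g xbg)) := by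
      have h2 : ∀ᶠ b : ℝ in Filter.atBot, (1 - p) * g xbg
          = (1 - p) * g (w * R + b * (d - R)) := by
        filter_upwards [Filter.eventually_le_atBot ((xbg - w * R) / (d - R))] with b hb
        rw [le_div_iff_of_neg ht0] at hb
        rw [hxbg (w * R + b * (d - R)) (by linarith)]
      exact Filter.Tendsto.congr' h2 tendsto_const_nhds
    have hsum : Filter.Tendsto (fun b : ℝ => p * f (w * R + b * (u - R)) +
        (1 - p) * g (w * R + b * (d - R))) Filter.atBot Filter.atBot :=
      Filter.Tendsto.atBot_add hf1 hg1
    have := (Filter.tendsto_const_mul_atBot_of_pos (inv_pos.mpr hR)).mpr hsum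
    exact this.congr fun b => (hφeq b).symm
  -- existence of a global maximizer
  obtain ⟨M1, hM1⟩ : ∃ M1, ∀ b ≥ M1, φ b < φ 0 :=
    Filter.eventually_atTop.mp (htop.eventually (Filter.eventually_lt_atBot (φ 0)))
  obtain ⟨M2, hM2⟩ : ∃ M2, ∀ b ≤ M2, φ b < φ 0 :=
    Filter.eventually_atBot.mp (hbot.eventually (Filter.eventually_lt_atBot (φ 0)))
  have h0AB : (0:ℝ) ∈ Set.Icc (min M2 0) (max M1 0) :=
    ⟨min_le_right _ _, le_max_right _ _⟩
  obtain ⟨b0, hb0mem, hb0max⟩ :=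
    isCompact_Icc.exists_isMaxOn ⟨0, h0AB⟩ hφc.continuousOn
  have hmax : ∀ b, φ b ≤ φ b0 := by
    intro b
    rcases le_or_gt b (max M1 0) with h | h
    · rcases le_or_gt (min M2 0) b with h' | h'
      · exact hb0max ⟨h', h⟩
      · have hb : φ b < φ 0 := hM2 b (lt_min_iff.mp h').1.le
        exact le_trans hb.le (hb0max h0AB)
    · have hb : φ b < φ 0 := hM1 b (le_of_lt (lt_of_le_of_lt (le_max_left M1 0) h))
      exact le_trans hb.le (hb0max h0AB)
  have hbddA : BddAbove (Set.range φ) := ⟨φ b0, by rintro _ ⟨b, rfl⟩; exact hmax b⟩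
  have hV : Vfun R u d p f g w = φ b0 := le_antisymm (ciSup_le hmax) (le_ciSup hbddA b0)
  have hBmem : ∀ b, b ∈ Bset R u d p f g w ↔ φ b = φ b0 := by
    intro b
    unfold Bset
    rw [Set.mem_setOf_eq, hV]
  have hBne : (Bset R u d p f g w).Nonempty := ⟨b0, (hBmem b0).mpr rfl⟩
  have hBclosed : IsClosed (Bset R u d p f g w) := by
    have : Bset R u d p f g w = φ ⁻¹' {φ b0} := Set.ext fun b => (hBmem b)
    rw [this]
    exact isClosed_singleton.preimage hφc
  have hBbdd : BddBelow (Bset R u d p f g w) := by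
    refine ⟨M2, fun b hb => ?_⟩
    by_contra h
    push_neg at h
    have h1 : φ b < φ 0 := hM2 b h.le
    have h2 : φ b = φ b0 := (hBmem b).mp hb
    have h3 : φ 0 ≤ φ b0 := hmax 0
    linarith
  have hβmem : betaFun R u d p f g w ∈ Bset R u d p f g w :=
    hBclosed.csInf_mem hBne hBbdd
  set β := betaFun R u d p f g w with hβdef
  have hβV : φ β = φ b0 := (hBmem β).mp hβmem
  have hβmax : ∀ b, φ b ≤ φ β := fun b => hβV ▸ hmax b
  -- suppose off the grid
  by_contra hGrid
  have hu : ∀ i, 1 ≤ i → i ≤ Nu → w * R + β * (u - R) ≠ xu i := by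
    intro i h1 h2 heq
    exact hGrid (Or.inl (Set.mem_biUnion (Finset.mem_Icc.mpr ⟨h1, h2⟩) heq))
  have hdn : ∀ j, 1 ≤ j → j ≤ Nd → w * R + β * (d - R) ≠ xd j := by
    intro j h1 h2 heq
    exact hGrid (Or.inr (Set.mem_biUnion (Finset.mem_Icc.mpr ⟨h1, h2⟩) heq))
  obtain ⟨εf, hεf, af, cf, haf⟩ := exists_affOn_nbhd hfpw hNu hu
  obtain ⟨εg, hεg, ag, cg, hag⟩ := exists_affOn_nbhd hgpw hNd hdn
  set δ := min (εf / (u - R)) (εg / (R - d)) with hδdef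
  have hRd : (0:ℝ) < R - d := by linarith
  have hδ : 0 < δ := lt_min (div_pos hεf hs0) (div_pos hεg hRd)
  have hδf : δ * (u - R) ≤ εf := by
    have h := min_le_left (εf / (u - R)) (εg / (R - d))
    rw [← hδdef] at h
    exact (le_div_iff₀ hs0).mp h
  have hδg : δ * (R - d) ≤ εg := by
    have h := min_le_right (εf / (u - R)) (εg / (R - d))
    rw [← hδdef] at h
    exact (le_div_iff₀ hRd).mp h
  have hmemf : ∀ b, β - δ ≤ b → b ≤ β + δ → w * R + b * (u - R) ∈
      Set.Icc (w * R + β * (u - R) - εf) (w * R + β * (u - R) + εf) := by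
    intro b hb1 hb2
    constructor
    · nlinarith [mul_le_mul_of_nonneg_right (show β - b ≤ δ by linarith) hs0.le]
    · nlinarith [mul_le_mul_of_nonneg_right (show b - β ≤ δ by linarith) hs0.le]
  have hmemg : ∀ b, β - δ ≤ b → b ≤ β + δ → w * R + b * (d - R) ∈
      Set.Icc (w * R + β * (d - R) - εg) (w * R + β * (d - R) + εg) := by
    intro b hb1 hb2
    constructor
    · nlinarith [mul_le_mul_of_nonneg_right (show b - β ≤ δ by linarith) hRd.le]
    · nlinarith [mul_le_mul_of_nonneg_right (show β - b ≤ δ by linarith) hRd.le]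
  have eval : ∀ b, β - δ ≤ b → b ≤ β + δ → φ b =
      R⁻¹ * (p * (af * (w * R + b * (u - R)) + cf) +
        (1 - p) * (ag * (w * R + b * (d - R)) + cg)) := by
    intro b hb1 hb2
    rw [hφeq, haf _ (hmemf b hb1 hb2), hag _ (hmemg b hb1 hb2)]
  have e0 := eval β (by linarith) (by linarith)
  have e1 := eval (β - δ) (by linarith) (by linarith)
  have e2 := eval (β + δ) (by linarith) (by linarith)
  have hmid : φ (β - δ) + φ (β + δ) = 2 * φ β := by
    rw [e0, e1, e2]; ring
  have heq : φ (β - δ) = φ β := by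
    have := hβmax (β - δ)
    have := hβmax (β + δ)
    linarith
  have hmemB : β - δ ∈ Bset R u d p f g w := (hBmem _).mpr (heq.trans hβV)
  have hle : β ≤ β - δ := csInf_le hBbdd hmemB
  linarith
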